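/- arXiv:2511.01426 — 2 statements merged into one kernel-verified Lean document; each statement's English description precedes it below -/
import Mathlib

section
/- Let X be a Priestley space, 𝒮 a family of clopen upsets of X, and W a clopen upset of X that is the least upper bound of 𝒮 in the poset of clopen upsets of X ordered by inclusion. Then the following are equivalent: (a) W equals the topological closure of ⋃𝒮; (b) the join of 𝒮 is exact, i.e., for every clopen upset A of X, the set A ∩ W is the least upper bound, in the poset of clopen upsets of X, of the family {A ∩ V | V ∈ 𝒮}. -/
/-- `W` is the least upper bound of the family `𝒮` in the poset of clopen
upsets of `X`, ordered by inclusion. -/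
def IsClopenUpsetLUB {X : Type*} [TopologicalSpace X] [Preorder X]
    (𝒮 : Set (Set X)) (W : Set X) : Prop :=
  IsClopen W ∧ IsUpperSet W ∧ (∀ V ∈ 𝒮, V ⊆ W) ∧
    ∀ W' : Set X, IsClopen W' → IsUpperSet W' → (∀ V ∈ 𝒮, V ⊆ W') → W ⊆ W'

/-- Let `X` be a Priestley space, `𝒮` a family of clopen upsets of `X`, and `W`
a clopen upset that is the least upper bound of `𝒮` in the poset of clopen
upsets of `X`.  Then `W = closure (⋃ 𝒮)` iff the join of `𝒮` is exact, i.e.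
for every clopen upset `A`, the set `A ∩ W` is the least upper bound, in the
poset of clopen upsets, of the family `{A ∩ V | V ∈ 𝒮}`. -/
theorem exact_join_iff_closure {X : Type*} [TopologicalSpace X] [PartialOrder X]
    [CompactSpace X] [PriestleySpace X]
    (𝒮 : Set (Set X)) (h𝒮 : ∀ V ∈ 𝒮, IsClopen V ∧ IsUpperSet V)
    (W : Set X) (hW : IsClopenUpsetLUB 𝒮 W) :
    W = closure (⋃₀ 𝒮) ↔
      ∀ A : Set X, IsClopen A → IsUpperSet A →
        IsClopenUpsetLUB ((fun V => A ∩ V) '' 𝒮) (A ∩ W) := by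
  classical
  obtain ⟨hWc, hWu, hWub, hWlub⟩ := hW
  have hSW : ⋃₀ 𝒮 ⊆ W := Set.sUnion_subset hWub
  have hclW : closure (⋃₀ 𝒮) ⊆ W := closure_minimal hSW hWc.isClosed
  constructor
  · -- closure ⇒ exact
    intro hWF A hAc hAu
    refine ⟨hAc.inter hWc, hAu.inter hWu, ?_, ?_⟩
    · rintro _ ⟨V, hV, rfl⟩
      exact Set.inter_subset_inter_right A (hWub V hV)
    · intro W' hW'c hW'u hbd x hx
      obtain ⟨hxA, hxW⟩ := hx
      by_contra hxW'
      rw [hWF] at hxW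
      have hopen : IsOpen (A ∩ W'ᶜ) := hAc.isOpen.inter hW'c.isClosed.isOpen_compl
      obtain ⟨y, ⟨hyA, hyW'⟩, hyS⟩ :=
        mem_closure_iff.mp hxW (A ∩ W'ᶜ) hopen ⟨hxA, hxW'⟩
      obtain ⟨V, hV, hyV⟩ := hyS
      exact hyW' (hbd (A ∩ V) ⟨V, hV, rfl⟩ ⟨hyA, hyV⟩)
  · -- exact ⇒ closure
    intro hex
    refine le_antisymm ?_ hclW
    intro x hxW
    by_contra hxF
    set F := closure (⋃₀ 𝒮) with hF
    have hFc : IsCompact F := isClosed_closure.isCompact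
    -- for each point of F, a separating clopen upset
    have key : ∀ y ∈ F, ∃ U : Set X, IsClopen U ∧ IsUpperSet U ∧
        ((x ∈ U ∧ y ∉ U) ∨ (x ∉ U ∧ y ∈ U)) := by
      intro y hy
      by_cases hyx : y ≤ x
      · have hne : ¬ x ≤ y := by
          intro hxy
          exact hxF (le_antisymm hxy hyx ▸ hy)
        obtain ⟨U, hUc, hUu, hxU, hyU⟩ := exists_isClopen_upper_of_not_le hne
        exact ⟨U, hUc, hUu, Or.inl ⟨hxU, hyU⟩⟩
      · obtain ⟨U, hUc, hUu, hyU, hxU⟩ := exists_isClopen_upper_of_not_le hyx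
        exact ⟨U, hUc, hUu, Or.inr ⟨hxU, hyU⟩⟩
    choose! U hUc hUu hUsep using key
    -- cover F
    have hcover : F ⊆ ⋃ y ∈ F, (if x ∈ U y then (U y)ᶜ else U y) := by
      intro y hy
      refine Set.mem_biUnion hy ?_
      rcases hUsep y hy with ⟨hxU, hyU⟩ | ⟨hxU, hyU⟩
      · simp [hxU, hyU]
      · simp [hxU, hyU]
    obtain ⟨t, ht⟩ := hFc.elim_finite_subcover_image
      (fun y hy => by
        by_cases hxU : x ∈ U y
        · simpa [hxU] using (hUc y hy).compl.isOpen
        · simpa [hxU] using (hUc y hy).isOpen) hcover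
    obtain ⟨htF, htfin, htcov⟩ := ht
    set A : Set X := ⋂ y ∈ t, (if x ∈ U y then U y else Set.univ) with hA
    set W' : Set X := ⋃ y ∈ t, (if x ∈ U y then (∅ : Set X) else U y) with hW'
    have hAc : IsClopen A := by
      refine htfin.isClopen_biInter fun y hy => ?_
      by_cases hxU : x ∈ U y
      · simpa [hxU] using hUc y (htF hy)
      · simp [hxU, isClopen_univ]
    have hAu : IsUpperSet A := isUpperSet_iInter₂ fun y hy => by
      by_cases hxU : x ∈ U y
      · simpa [hxU] using hUu y (htF hy)
      · simp [hxU, isUpperSet_univ]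
    have hxA : x ∈ A := Set.mem_iInter₂.mpr fun y hy => by
      by_cases hxU : x ∈ U y <;> simp [hxU]
    have hW'c : IsClopen W' := by
      refine htfin.isClopen_biUnion fun y hy => ?_
      by_cases hxU : x ∈ U y
      · simp [hxU, isClopen_empty]
      · simpa [hxU] using hUc y (htF hy)
    have hW'u : IsUpperSet W' := isUpperSet_iUnion₂ fun y hy => by
      by_cases hxU : x ∈ U y
      · simp [hxU, isUpperSet_empty]
      · simpa [hxU] using hUu y (htF hy)
    have hxW' : x ∉ W' := by
      simp only [hW', Set.mem_iUnion]
      rintro ⟨y, hy, hmem⟩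
      by_cases hxU : x ∈ U y
      · simp [hxU] at hmem
      · exact hxU (by simpa [hxU] using hmem)
    have hAF : A ∩ F ⊆ W' := by
      rintro z ⟨hzA, hzF⟩
      obtain ⟨y, hy, hz⟩ := Set.mem_iUnion₂.mp (htcov hzF)
      by_cases hxU : x ∈ U y
      · exfalso
        have : z ∈ U y := by
          have := Set.mem_iInter₂.mp hzA y hy
          simpa [hxU] using this
        simp [hxU] at hz
        exact hz this
      · refine Set.mem_iUnion₂.mpr ⟨y, hy, ?_⟩
        simpa [hxU] using by simpa [hxU] using hz
    have hbd : ∀ B ∈ (fun V => A ∩ V) '' 𝒮, B ⊆ W' := by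
      rintro _ ⟨V, hV, rfl⟩
      exact fun z hz =>
        hAF ⟨hz.1, subset_closure (Set.mem_sUnion.mpr ⟨V, hV, hz.2⟩)⟩
    have := (hex A hAc hAu).2.2.2 W' hW'c hW'u hbd ⟨hxA, hxW⟩
    exact hxW' this
end

section
/- Let X be a Priestley space and 𝒮 a family of clopen upsets of X. Then 𝒮 has a least upper bound in the poset of clopen upsets of X (ordered by inclusion) if and only if the upper closure ↑cl(⋃𝒮) of the closure of ⋃𝒮 is open; in that case ↑cl(⋃𝒮) is this least upper bound. -/
lemma exists_clopen_upset_sep {X : Type*} [TopologicalSpace X]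
    [Preorder X] [PriestleySpace X] {K : Set X} (hK : IsCompact K)
    {x : X} (hx : ∀ s ∈ K, ¬ s ≤ x) :
    ∃ W : Set X, IsClopen W ∧ IsUpperSet W ∧ K ⊆ W ∧ x ∉ W := by
  have h : ∀ s : X, ∃ U : Set X, s ∈ K → IsClopen U ∧ IsUpperSet U ∧ s ∈ U ∧ x ∉ U := by
    intro s
    by_cases hs : s ∈ K
    · obtain ⟨U, hU⟩ := exists_isClopen_upper_of_not_le (hx s hs)
      exact ⟨U, fun _ => hU⟩
    · exact ⟨∅, fun h => absurd h hs⟩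
  choose U hU using h
  obtain ⟨t, hts, htfin, hcover⟩ := hK.elim_finite_subcover_image
    (fun s hs => (hU s hs).1.isOpen)
    (fun s hs => Set.mem_biUnion hs (hU s hs).2.2.1)
  refine ⟨⋃ s ∈ t, U s, ?_, ?_, hcover, ?_⟩
  · exact htfin.isClopen_biUnion (fun s hs => (hU s (hts hs)).1)
  · exact isUpperSet_iUnion₂ (fun s hs => (hU s (hts hs)).2.1)
  · simp only [Set.mem_iUnion]
    rintro ⟨s, hs, hxs⟩
    exact (hU s (hts hs)).2.2.2 hxs

/-- Let `X` be a Priestley space and `𝒮` a family of clopen upsets of `X`.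
Then `𝒮` has a least upper bound in the poset of clopen upsets of `X` iff the
upper closure `↑cl(⋃𝒮)` of the closure of `⋃𝒮` is open; in that case
`↑cl(⋃𝒮)` is this least upper bound. -/
theorem hasLUB_iff_upperClosure_closure_isOpen {X : Type*} [TopologicalSpace X]
    [PartialOrder X] [CompactSpace X] [PriestleySpace X]
    (𝒮 : Set (Set X)) (h𝒮 : ∀ V ∈ 𝒮, IsClopen V ∧ IsUpperSet V) :
    ((∃ W : Set X, IsClopenUpsetLUB 𝒮 W) ↔
        IsOpen {x : X | ∃ s ∈ closure (⋃₀ 𝒮), s ≤ x}) ∧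
      (IsOpen {x : X | ∃ s ∈ closure (⋃₀ 𝒮), s ≤ x} →
        IsClopenUpsetLUB 𝒮 {x : X | ∃ s ∈ closure (⋃₀ 𝒮), s ≤ x}) := by
  set K := closure (⋃₀ 𝒮) with hKdef
  set U := {x : X | ∃ s ∈ K, s ≤ x} with hUdef
  have hKcomp : IsCompact K := isClosed_closure.isCompact
  -- U is closed
  have hUclosed : IsClosed U := by
    rw [← isOpen_compl_iff]
    rw [isOpen_iff_forall_mem_open]
    intro x hx
    simp only [Set.mem_compl_iff, hUdef, Set.mem_setOf_eq, not_exists, not_and] at hx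
    obtain ⟨W, hWc, hWu, hKW, hxW⟩ := exists_clopen_upset_sep hKcomp hx
    refine ⟨Wᶜ, ?_, hWc.compl.isOpen, hxW⟩
    intro y hy
    simp only [Set.mem_compl_iff, hUdef, Set.mem_setOf_eq, not_exists, not_and]
    intro s hs hsy
    exact hy (hWu hsy (hKW hs))
  -- core facts about U
  have hUupper : IsUpperSet U := by
    rintro a b hab ⟨s, hs, hsa⟩
    exact ⟨s, hs, hsa.trans hab⟩
  have hUsub : ∀ V ∈ 𝒮, V ⊆ U := by
    intro V hV x hxV
    exact ⟨x, subset_closure (Set.mem_sUnion.2 ⟨V, hV, hxV⟩), le_refl x⟩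
  have hUleast : ∀ W' : Set X, IsClopen W' → IsUpperSet W' → (∀ V ∈ 𝒮, V ⊆ W') → U ⊆ W' := by
    intro W' hW'c hW'u hW's x hxU
    obtain ⟨s, hs, hsx⟩ := hxU
    have hKW' : K ⊆ W' := closure_minimal (Set.sUnion_subset hW's) hW'c.isClosed
    exact hW'u hsx (hKW' hs)
  have hsecond : IsOpen U → IsClopenUpsetLUB 𝒮 U :=
    fun hUo => ⟨⟨hUclosed, hUo⟩, hUupper, hUsub, hUleast⟩
  refine ⟨⟨?_, fun hUo => ⟨U, hsecond hUo⟩⟩, hsecond⟩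
  rintro ⟨W, hWc, hWu, hWs, hWl⟩
  -- show W = U, hence U open
  have h1 : U ⊆ W := hUleast W hWc hWu hWs
  have h2 : W ⊆ U := by
    intro x hxW
    by_contra hxU
    simp only [hUdef, Set.mem_setOf_eq, not_exists, not_and] at hxU
    obtain ⟨W', hW'c, hW'u, hKW', hxW'⟩ := exists_clopen_upset_sep hKcomp hxU
    exact hxW' (hWl W' hW'c hW'u
      (fun V hV => (Set.subset_sUnion_of_mem hV).trans (subset_closure.trans hKW')) hxW)
  have : U = W := Set.Subset.antisymm h1 h2
  rw [this]
  exact hWc.isOpen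
end
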